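/- Let p be a prime and n ≥ 1. Any two nondegenerate Hermitian spaces of dimension n over F_{p^2} (relative to the extension F_{p^2}/F_p) are isometric; in particular every nondegenerate Hermitian form on F_{p^2}^n is isometric to the standard form ⟨x,y⟩ = Σ_i x_i y_i^p. -/

import Mathlib

/-- A Hermitian form relative to `𝔽_{p²}/𝔽_p`: biadditive, linear in the first
variable and conjugate symmetric with respect to the Frobenius `x ↦ x^p`. -/
def IsHermitianForm (p : ℕ) [Fact p.Prime] {V : Type*} [AddCommGroup V]
    [Module (GaloisField p 2) V] (h : V → V → GaloisField p 2) : Prop :=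
  (∀ x x' y, h (x + x') y = h x y + h x' y) ∧
  (∀ (c : GaloisField p 2) (x y : V), h (c • x) y = c * h x y) ∧
  (∀ x y, h y x = (h x y) ^ p)



variable {p : ℕ} [Fact p.Prime]

namespace Stmt17Aux

lemma card_F [Fintype (GaloisField p 2)] : Fintype.card (GaloisField p 2) = p ^ 2 := by
  have := GaloisField.card p 2 (by norm_num)
  simpa [Nat.card_eq_fintype_card] using this

lemma frob_frob (a : GaloisField p 2) : (a ^ p) ^ p = a := by
  let _ : Fintype (GaloisField p 2) := Fintype.ofFinite _
  rw [← pow_mul]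
  have h := FiniteField.pow_card a
  rwa [card_F, pow_two] at h

lemma frob_add (a b : GaloisField p 2) : (a + b) ^ p = a ^ p + b ^ p :=
  add_pow_char _ _ _

lemma exists_trace_ne_zero : ∃ d : GaloisField p 2, d + d ^ p ≠ 0 := by
  by_contra hcon
  push_neg at hcon
  have hneg : ∀ d : GaloisField p 2, d ^ p = -d := fun d => by
    have := hcon d; linear_combination this
  have h2 : (2 : GaloisField p 2) = 0 := by
    have h1 : ((1 : GaloisField p 2) * 1) ^ p = -(1*1) := hneg _
    have h2 : ((1:GaloisField p 2)) ^ p = -1 := hneg 1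
    have := mul_pow (1 : GaloisField p 2) 1 p
    rw [h1, h2] at this
    linear_combination -this
  have hp2 : p = 2 := by
    have := (CharP.cast_eq_zero_iff (GaloisField p 2) p 2).mp (by exact_mod_cast h2)
    exact (Nat.prime_dvd_prime_iff_eq (Fact.out) Nat.prime_two).mp this
  clear hcon
  subst hp2
  -- in char 2 every element satisfies d^2 = d, so the field has ≤ 2 elements
  have hid : ∀ d : GaloisField 2 2, d = 0 ∨ d = 1 := by
    intro d
    have hd : d ^ 2 = -d := hneg d
    have hd2 : d ^ 2 = d := by
      rw [hd]
      have h3 : (2 : GaloisField 2 2) * d = 0 := by rw [h2]; ring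
      linear_combination -h3
    have : d * (d - 1) = 0 := by linear_combination hd2
    rcases mul_eq_zero.mp this with h | h
    · exact Or.inl h
    · exact Or.inr (by linear_combination h)
  let _ : Fintype (GaloisField 2 2) := Fintype.ofFinite _
  have hsurj : Function.Surjective (fun b : Bool => if b then (1 : GaloisField 2 2) else 0) := by
    intro d
    rcases hid d with h | h
    · exact ⟨false, h.symm⟩
    · exact ⟨true, h.symm⟩
  have hle := Fintype.card_le_of_surjective _ hsurj
  rw [card_F] at hle
  simp at hle

end Stmt17Aux

namespace Stmt17Aux

lemma exists_norm_eq (c : GaloisField p 2) (hc0 : c ≠ 0) (hcp : c ^ p = c) :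
    ∃ d : GaloisField p 2, d ^ (p + 1) = c := by
  let _ : Fintype (GaloisField p 2) := Fintype.ofFinite _
  have hp : p.Prime := Fact.out
  obtain ⟨g, hg⟩ := IsCyclic.exists_generator (α := (GaloisField p 2)ˣ)
  set cu : (GaloisField p 2)ˣ := Units.mk0 c hc0 with hcu
  obtain ⟨k, hk0⟩ : cu ∈ Submonoid.powers g :=
    (mem_powers_iff_mem_zpowers).mpr (hg cu)
  have hk : g ^ k = cu := hk0
  clear hk0
  have horder : orderOf g = p ^ 2 - 1 := by
    rw [orderOf_eq_card_of_forall_mem_zpowers hg, Nat.card_units,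
      GaloisField.card p 2 (by norm_num)]
  have hcup : cu ^ p = cu := by
    ext
    push_cast
    exact hcp
  have hmod : k * p ≡ k [MOD p ^ 2 - 1] := by
    rw [← horder]
    rw [← pow_eq_pow_iff_modEq]
    rw [pow_mul, hk, hcup]
  have hdvd : (p ^ 2 - 1) ∣ k * (p - 1) := by
    have h1 : k ≤ k * p := Nat.le_mul_of_pos_right k hp.pos
    have := (Nat.modEq_iff_dvd' h1).mp hmod.symm
    have h2 : k * p - k = k * (p - 1) := by
      have := hp.two_le
      cases p with
      | zero => omega
      | succ q => simp [Nat.mul_succ, Nat.mul_sub]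
    rwa [h2] at this
  have hfact : p ^ 2 - 1 = (p + 1) * (p - 1) := by
    obtain ⟨q, rfl⟩ := Nat.exists_eq_add_of_le hp.two_le
    have h1 : 2 + q - 1 = q + 1 := by omega
    rw [h1]
    have h2 : (2 + q) ^ 2 = (2 + q + 1) * (q + 1) + 1 := by ring
    exact Nat.sub_eq_of_eq_add h2
  rw [hfact] at hdvd
  have hpm1 : 0 < p - 1 := by have := hp.two_le; omega
  have hdvd2 : (p + 1) ∣ k := by
    have := (Nat.mul_dvd_mul_iff_right hpm1).mp hdvd
    exact this
  obtain ⟨m, rfl⟩ := hdvd2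
  refine ⟨(g : GaloisField p 2) ^ m, ?_⟩
  have h5 : (g ^ m) ^ (p + 1) = cu := by rw [← pow_mul, mul_comm m (p+1), hk]
  calc ((g : GaloisField p 2) ^ m) ^ (p + 1)
      = (((g ^ m) ^ (p + 1) : (GaloisField p 2)ˣ) : GaloisField p 2) := by push_cast; ring
    _ = (cu : GaloisField p 2) := by rw [h5]
    _ = c := rfl

end Stmt17Aux

namespace Stmt17Aux

variable {V : Type*} [AddCommGroup V] [Module (GaloisField p 2) V]
  {h : V → V → GaloisField p 2} (hh : IsHermitianForm p h)

include hh

lemma h_zero_left (y : V) : h 0 y = 0 := by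
  have h0 := hh.1 0 0 y
  rw [add_zero] at h0
  linear_combination -h0

lemma h_zero_right (x : V) : h x 0 = 0 := by
  rw [hh.2.2 0 x, h_zero_left hh, zero_pow (Nat.Prime.ne_zero Fact.out)]

lemma h_add_right (x y y' : V) : h x (y + y') = h x y + h x y' := by
  rw [hh.2.2 (y + y') x, hh.1 y y' x, frob_add, ← hh.2.2 y x, ← hh.2.2 y' x]

lemma h_smul_right (c : GaloisField p 2) (x y : V) :
    h x (c • y) = c ^ p * h x y := by
  rw [hh.2.2 (c • y) x, hh.2.1 c y x, mul_pow, ← hh.2.2 y x]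

lemma h_sub_left (x y z : V) : h (x - y) z = h x z - h y z := by
  have h0 := hh.1 (x - y) y z
  rw [sub_add_cancel] at h0
  linear_combination -h0

lemma h_sum_left {ι : Type*} (s : Finset ι) (f : ι → V) (y : V) :
    h (∑ i ∈ s, f i) y = ∑ i ∈ s, h (f i) y := by
  classical
  induction s using Finset.induction_on with
  | empty => simpa using h_zero_left hh y
  | insert _ _ hx ih => rw [Finset.sum_insert hx, Finset.sum_insert hx, hh.1, ih]

lemma h_sum_right {ι : Type*} (s : Finset ι) (f : ι → V) (x : V) :
    h x (∑ i ∈ s, f i) = ∑ i ∈ s, h x (f i) := by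
  classical
  induction s using Finset.induction_on with
  | empty => simpa using h_zero_right hh x
  | insert _ _ hx ih => rw [Finset.sum_insert hx, Finset.sum_insert hx, h_add_right hh, ih]

end Stmt17Aux

namespace Stmt17Aux

variable {V : Type*} [AddCommGroup V] [Module (GaloisField p 2) V]
  {h : V → V → GaloisField p 2} (hh : IsHermitianForm p h)

include hh

lemma exists_self_ne_zero [Nontrivial V] (hnd : ∀ x : V, (∀ y : V, h x y = 0) → x = 0) :
    ∃ x : V, h x x ≠ 0 := by
  by_contra hcon
  push_neg at hcon
  obtain ⟨x, hx0⟩ := exists_ne (0 : V)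
  have hxy : ∃ y, h x y ≠ 0 := by
    by_contra hy
    push_neg at hy
    exact hx0 (hnd x hy)
  obtain ⟨y, ha⟩ := hxy
  set a := h x y with ha_def
  obtain ⟨d, hd⟩ := exists_trace_ne_zero (p := p)
  have hap : a ^ p ≠ 0 := pow_ne_zero _ ha
  set c : GaloisField p 2 := d * (a ^ p)⁻¹ with hc_def
  have e1 : h (x + c • y) (x + c • y)
      = h x x + c ^ p * h x y + c * (h x y) ^ p + c * (c ^ p * h y y) := by
    rw [hh.1, h_add_right hh, h_add_right hh, h_smul_right hh, hh.2.1, hh.2.1,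
      h_smul_right hh, hh.2.2 x y]
    ring
  rw [hcon x, hcon y, hcon (x + c • y)] at e1
  have h1 : c * a ^ p = d := by
    rw [hc_def]
    field_simp
  have h2 : c ^ p * a = d ^ p := by
    rw [hc_def, mul_pow, inv_pow, frob_frob, mul_assoc, inv_mul_cancel₀ ha, mul_one]
  apply hd
  rw [← ha_def] at e1
  linear_combination -e1 - h1 - h2

lemma exists_self_eq_one [Nontrivial V] (hnd : ∀ x : V, (∀ y : V, h x y = 0) → x = 0) :
    ∃ e : V, h e e = 1 := by
  obtain ⟨x, hxx⟩ := exists_self_ne_zero hh hnd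
  have hfix : (h x x)⁻¹ ^ p = (h x x)⁻¹ := by
    rw [inv_pow, ← hh.2.2 x x]
  obtain ⟨d, hd⟩ := exists_norm_eq ((h x x)⁻¹) (inv_ne_zero hxx) hfix
  refine ⟨d • x, ?_⟩
  rw [hh.2.1, h_smul_right hh]
  have : d * (d ^ p * h x x) = d ^ (p + 1) * h x x := by ring
  rw [this, hd, inv_mul_cancel₀ hxx]

end Stmt17Aux

namespace Stmt17Aux

lemma ortho_basis (n : ℕ) : ∀ {V : Type u} [AddCommGroup V] [Module (GaloisField p 2) V]
    [FiniteDimensional (GaloisField p 2) V],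
    Module.finrank (GaloisField p 2) V = n →
    ∀ h : V → V → GaloisField p 2, IsHermitianForm p h →
    (∀ x : V, (∀ y : V, h x y = 0) → x = 0) →
    ∃ b : Module.Basis (Fin n) (GaloisField p 2) V,
      ∀ i j, h (b i) (b j) = if i = j then 1 else 0 := by
  induction n with
  | zero =>
    intro V _ _ _ hrank h hh hnd
    have : Subsingleton V := (Module.finrank_zero_iff (R := GaloisField p 2)).mp hrank
    exact ⟨Module.Basis.empty V, fun i => i.elim0⟩
  | succ n ih =>
    intro V _ _ _ hrank h hh hnd
    have : Nontrivial V := Module.nontrivial_of_finrank_eq_succ hrank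
    obtain ⟨e, he⟩ := exists_self_eq_one hh hnd
    set φ : V →ₗ[GaloisField p 2] GaloisField p 2 :=
      { toFun := fun x => h x e
        map_add' := fun x x' => hh.1 x x' e
        map_smul' := fun c x => hh.2.1 c x e } with hφ
    have hφ_apply : ∀ x, φ x = h x e := fun _ => rfl
    set W := LinearMap.ker φ with hW
    have hmemW : ∀ x : V, x ∈ W ↔ h x e = 0 := fun x => LinearMap.mem_ker
    have hrange : LinearMap.range φ = ⊤ := by
      rw [LinearMap.range_eq_top]
      intro c
      refine ⟨c • e, ?_⟩
      rw [hφ_apply, hh.2.1, he, mul_one]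
    have hrankW : Module.finrank (GaloisField p 2) W = n := by
      have hsum := LinearMap.finrank_range_add_finrank_ker φ
      rw [hrange, finrank_top, Module.finrank_self, hrank] at hsum
      rw [hW]
      omega
    -- the restricted form on W
    set h' : W → W → GaloisField p 2 := fun x y => h x y with hh'_def
    have hh' : IsHermitianForm p h' :=
      ⟨fun x x' y => by simpa [hh'_def] using hh.1 x x' y,
       fun c x y => by
         have : ((c • x : W) : V) = c • (x : V) := rfl
         simp only [hh'_def, this]
         exact hh.2.1 c x y,
       fun x y => hh.2.2 x y⟩
    have hnd' : ∀ x : W, (∀ y : W, h' x y = 0) → x = 0 := by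
      intro x hx
      have hxe : h (x : V) e = 0 := (hmemW _).mp x.2
      have : (x : V) = 0 := by
        apply hnd
        intro v
        have hdec : v = h v e • e + (v - h v e • e) := by abel
        have hmem : v - h v e • e ∈ W := by
          rw [hmemW, h_sub_left hh, hh.2.1, he, mul_one, sub_self]
        rw [hdec, h_add_right hh, h_smul_right hh, hxe,
          show h (x : V) (v - h v e • e) = h' x ⟨_, hmem⟩ from rfl, hx]
        ring
      exact Subtype.ext this
    obtain ⟨b', hb'⟩ := ih hrankW h' hh' hnd'
    have hli : ∀ (c : GaloisField p 2), ∀ x ∈ W, c • e + x = 0 → c = 0 := by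
      intro c x hx h0
      have := congrArg (fun z => h z e) h0
      rw [hh.1, hh.2.1, he, mul_one, (hmemW x).mp hx, add_zero,
        h_zero_left hh] at this
      exact this
    have hsp : ∀ z : V, ∃ c : GaloisField p 2, z + c • e ∈ W := by
      intro z
      refine ⟨-(h z e), ?_⟩
      rw [hmemW, hh.1, hh.2.1, he, mul_one]
      ring
    refine ⟨Module.Basis.mkFinCons e b' hli hsp, ?_⟩
    have hb'e : ∀ j, h ((b' j : V)) e = 0 := fun j => (hmemW _).mp (b' j).2
    intro i j
    simp only [Module.Basis.coe_mkFinCons]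
    refine Fin.cases ?_ (fun i => ?_) i <;> refine Fin.cases ?_ (fun j => ?_) j
    · simpa using he
    · simp only [Fin.cons_zero, Fin.cons_succ, Function.comp_apply]
      rw [hh.2.2, hb'e j, zero_pow (Nat.Prime.ne_zero Fact.out)]
      simp [(Fin.succ_ne_zero j).symm]
    · simp only [Fin.cons_zero, Fin.cons_succ, Function.comp_apply]
      rw [hb'e i]
      simp [Fin.succ_ne_zero i]
    · simp only [Fin.cons_succ, Function.comp_apply]
      rw [show h ((b' i : V)) ((b' j : V)) = h' (b' i) (b' j) from rfl, hb' i j]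
      simp [Fin.succ_inj]

end Stmt17Aux

namespace Stmt17Aux

variable {V : Type*} [AddCommGroup V] [Module (GaloisField p 2) V]
  {h : V → V → GaloisField p 2}

lemma herm_eval {n : ℕ} (hh : IsHermitianForm p h)
    (b : Module.Basis (Fin n) (GaloisField p 2) V)
    (hb : ∀ i j, h (b i) (b j) = if i = j then 1 else 0) (x y : V) :
    h x y = ∑ i, b.repr x i * (b.repr y i) ^ p := by
  conv_lhs => rw [← b.sum_repr x, ← b.sum_repr y]
  rw [h_sum_left hh]
  refine Finset.sum_congr rfl fun i _ => ?_
  rw [hh.2.1, h_sum_right hh]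
  have hterm : ∀ j, h (b i) ((b.repr y j) • b j)
      = (b.repr y j) ^ p * (if i = j then 1 else 0) := fun j => by
    rw [h_smul_right hh, hb]
  rw [Finset.sum_congr rfl fun j _ => hterm j]
  simp [mul_ite]

end Stmt17Aux


/-- Any two nondegenerate Hermitian spaces of the same dimension `n` over `𝔽_{p²}`
(relative to `𝔽_{p²}/𝔽_p`) are isometric; in particular every nondegenerate Hermitian
form on `𝔽_{p²}ⁿ` is isometric to the standard form `⟨x,y⟩ = ∑ i, x i * (y i)^p`. -/
theorem stmt17 (p n : ℕ) [Fact p.Prime]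
    {V₁ V₂ : Type*} [AddCommGroup V₁] [Module (GaloisField p 2) V₁]
    [AddCommGroup V₂] [Module (GaloisField p 2) V₂]
    [FiniteDimensional (GaloisField p 2) V₁] [FiniteDimensional (GaloisField p 2) V₂]
    (hd₁ : Module.finrank (GaloisField p 2) V₁ = n)
    (hd₂ : Module.finrank (GaloisField p 2) V₂ = n)
    (h₁ : V₁ → V₁ → GaloisField p 2) (hherm₁ : IsHermitianForm p h₁)
    (hnd₁ : ∀ x : V₁, (∀ y : V₁, h₁ x y = 0) → x = 0)
    (h₂ : V₂ → V₂ → GaloisField p 2) (hherm₂ : IsHermitianForm p h₂)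
    (hnd₂ : ∀ x : V₂, (∀ y : V₂, h₂ x y = 0) → x = 0) :
    (∃ e : V₁ ≃ₗ[GaloisField p 2] V₂, ∀ x y, h₂ (e x) (e y) = h₁ x y) ∧
    (∀ h : (Fin n → GaloisField p 2) → (Fin n → GaloisField p 2) → GaloisField p 2,
        IsHermitianForm p h → (∀ x, (∀ y, h x y = 0) → x = 0) →
        ∃ e : (Fin n → GaloisField p 2) ≃ₗ[GaloisField p 2] (Fin n → GaloisField p 2),
          ∀ x y, (∑ i, (e x) i * ((e y) i) ^ p) = h x y) := by
  classical
  constructor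
  · obtain ⟨b₁, hb₁⟩ := Stmt17Aux.ortho_basis n hd₁ h₁ hherm₁ hnd₁
    obtain ⟨b₂, hb₂⟩ := Stmt17Aux.ortho_basis n hd₂ h₂ hherm₂ hnd₂
    refine ⟨b₁.equivFun.trans b₂.equivFun.symm, fun x y => ?_⟩
    rw [Stmt17Aux.herm_eval hherm₁ b₁ hb₁ x y, Stmt17Aux.herm_eval hherm₂ b₂ hb₂]
    have hrep : ∀ (z : V₁) (i : Fin n),
        b₂.repr ((b₁.equivFun.trans b₂.equivFun.symm) z) i = b₁.repr z i := by
      intro z i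
      have h1 : b₂.equivFun ((b₁.equivFun.trans b₂.equivFun.symm) z) = b₁.equivFun z := by
        rw [LinearEquiv.trans_apply, LinearEquiv.apply_symm_apply]
      calc b₂.repr ((b₁.equivFun.trans b₂.equivFun.symm) z) i
          = (b₂.equivFun ((b₁.equivFun.trans b₂.equivFun.symm) z)) i := by
            rw [Module.Basis.equivFun_apply]
        _ = (b₁.equivFun z) i := by rw [h1]
        _ = b₁.repr z i := by rw [Module.Basis.equivFun_apply]
    refine Finset.sum_congr rfl fun i _ => ?_
    rw [hrep, hrep]
  · intro h hh hnd
    have hrk : Module.finrank (GaloisField p 2) (Fin n → GaloisField p 2) = n := by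
      simp
    obtain ⟨b, hb⟩ := Stmt17Aux.ortho_basis n hrk h hh hnd
    refine ⟨b.equivFun, fun x y => ?_⟩
    rw [Stmt17Aux.herm_eval hh b hb x y]
    refine Finset.sum_congr rfl fun i _ => ?_
    simp [Module.Basis.equivFun_apply]
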